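/- Let φ : Σ_A → ℝ be Hölder. Fix two admissible pasts a, b : {i : ℤ // i < 0} → Fin r (meaning A (a i) (a (i+1)) holds for all i < −1, and likewise for b). For a one-sided admissible sequence c with A (a (−1)) (c 0) and A (b (−1)) (c 0), let a·c and b·c denote the points of Σ_A equal to a on negative indices and to c on nonnegative indices, and set F(c) = Σ_{k=0}^∞ (φ(σ^k (b·c)) − φ(σ^k (a·c))) (this series converges absolutely). Then F is Hölder on its domain: there exist C' > 0 and α' ∈ (0,1] such that |F(c) − F(c')| ≤ C' · d⁺(c,c')^{α'} for all one-sided admissible sequences c, c' in the domain of F. -/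

import Mathlib

open Real

variable {r : ℕ}

/-- The two-sided subshift of finite type determined by the transition
matrix `A`. -/
abbrev TwoSided (A : Fin r → Fin r → Prop) : Type :=
  {x : ℤ → Fin r // ∀ i, A (x i) (x (i + 1))}

/-- The shift homeomorphism `σ` on the two-sided subshift. -/
def shift2 {A : Fin r → Fin r → Prop} (x : TwoSided A) : TwoSided A :=
  ⟨fun i => x.1 (i + 1), fun i => x.2 (i + 1)⟩

/-- The metric `d(x,y) = ∑_{i ∈ ℤ, x i ≠ y i} 2^{-|i|}` on the two-sided
subshift. -/
noncomputable def dist2 {A : Fin r → Fin r → Prop} (x y : TwoSided A) : ℝ :=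
  ∑' i : ℤ, if x.1 i ≠ y.1 i then (2 : ℝ) ^ (-|i|) else 0

/-- The one-sided metric `d⁺(c,c') = ∑_{i ∈ ℕ, c i ≠ c' i} 2^{-i}` on
one-sided sequences. -/
noncomputable def distPlus (c c' : ℕ → Fin r) : ℝ :=
  ∑' i : ℕ, if c i ≠ c' i then ((2 : ℝ)⁻¹) ^ i else 0

/-- `ψ` is Hölder with respect to the distance function `d`. -/
def IsHolderWrt {X : Type*} (d : X → X → ℝ) (ψ : X → ℝ) : Prop :=
  ∃ C > 0, ∃ α ∈ Set.Ioc (0 : ℝ) 1, ∀ x y, |ψ x - ψ y| ≤ C * d x y ^ α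

/-- The point `a·c` of `Σ_A` equal to the past `a` on negative indices and to
the one-sided admissible sequence `c` on nonnegative indices.  Admissibility
requires: `a` admissible on negative indices, `c` admissible, and
`A (a (−1)) (c 0)`. -/
def pastePt (A : Fin r → Fin r → Prop) (a : ℤ → Fin r) (c : ℕ → Fin r)
    (ha : ∀ i : ℤ, i < -1 → A (a i) (a (i + 1)))
    (hc : ∀ i : ℕ, A (c i) (c (i + 1)))
    (hac : A (a (-1)) (c 0)) : TwoSided A :=
  ⟨fun i => if h : i < 0 then a i else c i.toNat, by
    intro i
    rcases lt_trichotomy i (-1) with h | h | h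
    · have h1 : i < 0 := by omega
      have h2 : i + 1 < 0 := by omega
      simp only [dif_pos h1, dif_pos h2]
      exact ha i h
    · subst h
      have h1 : (-1 : ℤ) < 0 := by norm_num
      have h2 : ¬ ((-1 : ℤ) + 1 < 0) := by norm_num
      simp only [dif_pos h1, dif_neg h2]
      have h3 : ((-1 : ℤ) + 1).toNat = 0 := by norm_num
      rw [h3]
      exact hac
    · have h1 : ¬ i < 0 := by omega
      have h2 : ¬ i + 1 < 0 := by omega
      simp only [dif_neg h1, dif_neg h2]
      have h3 : (i + 1).toNat = i.toNat + 1 := by omega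
      rw [h3]
      exact hc i.toNat⟩

lemma shift2_iter_apply {A : Fin r → Fin r → Prop} (k : ℕ) (x : TwoSided A) (i : ℤ) :
    (shift2^[k] x).1 i = x.1 (i + k) := by
  induction k generalizing x i with
  | zero => simp
  | succ n ih =>
    rw [Function.iterate_succ_apply, ih]
    show x.1 (i + n + 1) = x.1 (i + (n+1 : ℕ))
    norm_num
    ring_nf

lemma tail_bound_right (F : ℤ → ℝ)
    (h2 : ∀ i, F i ≤ (2:ℝ) ^ (-|i|)) (m : ℕ)
    (h0 : ∀ i : ℤ, i < (m:ℤ) → F i = 0) :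
    ∑' i, F i ≤ 2 * (2⁻¹:ℝ) ^ m := by
  by_cases hs : Summable F
  · have hsupp : Function.support F ⊆ Set.Ici (m:ℤ) := by
      intro i hi
      by_contra h
      exact hi (h0 i (by simpa [Set.mem_Ici] using h))
    have key : ∑' i : Set.Ici (m:ℤ), F i ≤ ∑' n : ℕ, (2⁻¹:ℝ)^m * (2⁻¹)^n := by
      refine Summable.tsum_le_tsum_of_inj (fun j => (j.1 - m).toNat)
        (fun j j' hjj' => ?_) (fun n _ => by positivity) (fun j => ?_)
        (hs.subtype _) (by
          apply Summable.mul_left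
          exact summable_geometric_of_lt_one (by norm_num) (by norm_num))
      · have hj := j.2
        have hj' := j'.2
        simp only [Set.mem_Ici] at hj hj'
        have hjj2 : (j.1 - m).toNat = (j'.1 - m).toNat := hjj'
        ext
        omega
      · have hj := j.2
        simp only [Set.mem_Ici] at hj
        calc F j.1 ≤ (2:ℝ) ^ (-|j.1|) := h2 _
          _ = (2⁻¹:ℝ)^m * (2⁻¹)^((j.1 - m).toNat) := by
              have h1' : |j.1| = ((m + (j.1 - m).toNat : ℕ) : ℤ) := by
                rw [abs_of_nonneg (by omega)]; omega
              rw [h1', zpow_neg, ← inv_zpow, zpow_natCast, pow_add]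
    have heq : ∑' i : Set.Ici (m:ℤ), F i = ∑' i, F i :=
      tsum_subtype_eq_of_support_subset hsupp
    have hgeo : ∑' n : ℕ, (2⁻¹:ℝ)^m * (2⁻¹)^n = (2⁻¹:ℝ)^m * 2 := by
      rw [tsum_mul_left, tsum_geometric_of_lt_one (by norm_num) (by norm_num)]
      norm_num
    rw [← heq]
    rw [hgeo] at key
    linarith [key]
  · rw [tsum_eq_zero_of_not_summable hs]
    positivity

lemma tail_bound_left (F : ℤ → ℝ)
    (h2 : ∀ i, F i ≤ (2:ℝ) ^ (-|i|)) (m : ℕ)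
    (h0 : ∀ i : ℤ, -(m:ℤ) < i → F i = 0) :
    ∑' i, F i ≤ 2 * (2⁻¹:ℝ) ^ m := by
  have := tail_bound_right (fun i => F (-i))
    (fun i => by simpa using h2 (-i)) m (fun i hi => h0 (-i) (by omega))
  have e := (Equiv.neg ℤ).tsum_eq F
  simp only [Equiv.neg_apply] at e
  rw [← e]
  exact this

lemma dist2_le_right {A : Fin r → Fin r → Prop} (x y : TwoSided A) (m : ℕ)
    (h : ∀ i : ℤ, i < (m:ℤ) → x.1 i = y.1 i) :
    dist2 x y ≤ 2 * (2⁻¹:ℝ) ^ m := by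
  refine tail_bound_right _ (fun i => ?_) m (fun i hi => ?_)
  · split <;> [exact le_refl _; positivity]
  · rw [if_neg (by simpa using h i hi)]

lemma dist2_le_left {A : Fin r → Fin r → Prop} (x y : TwoSided A) (m : ℕ)
    (h : ∀ i : ℤ, -(m:ℤ) < i → x.1 i = y.1 i) :
    dist2 x y ≤ 2 * (2⁻¹:ℝ) ^ m := by
  refine tail_bound_left _ (fun i => ?_) m (fun i hi => ?_)
  · split <;> [exact le_refl _; positivity]
  · rw [if_neg (by simpa using h i hi)]

lemma dist2_nonneg' {A : Fin r → Fin r → Prop} (x y : TwoSided A) : 0 ≤ dist2 x y :=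
  tsum_nonneg fun i => by split <;> positivity

/-- Let `φ : Σ_A → ℝ` be Hölder, and fix two admissible pasts `a`, `b`.
For a one-sided admissible sequence `c` compatible with both pasts, set
`F(c) = ∑_{k=0}^∞ (φ(σ^k (b·c)) − φ(σ^k (a·c)))`.  Then `F` is Hölder on its
domain with respect to the one-sided metric `d⁺`. -/
theorem transfer_series_holder
    {A : Fin r → Fin r → Prop} (φ : TwoSided A → ℝ)
    (hφ : IsHolderWrt dist2 φ)
    (a b : ℤ → Fin r)
    (ha : ∀ i : ℤ, i < -1 → A (a i) (a (i + 1)))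
    (hb : ∀ i : ℤ, i < -1 → A (b i) (b (i + 1))) :
    ∃ C' > 0, ∃ α' ∈ Set.Ioc (0 : ℝ) 1,
      ∀ (c c' : ℕ → Fin r)
        (hc : ∀ i : ℕ, A (c i) (c (i + 1))) (hc' : ∀ i : ℕ, A (c' i) (c' (i + 1)))
        (hac : A (a (-1)) (c 0)) (hbc : A (b (-1)) (c 0))
        (hac' : A (a (-1)) (c' 0)) (hbc' : A (b (-1)) (c' 0)),
        |(∑' k : ℕ, (φ (shift2^[k] (pastePt A b c hb hc hbc)) -
              φ (shift2^[k] (pastePt A a c ha hc hac)))) -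
          (∑' k : ℕ, (φ (shift2^[k] (pastePt A b c' hb hc' hbc')) -
              φ (shift2^[k] (pastePt A a c' ha hc' hac'))))| ≤
          C' * distPlus c c' ^ α' := by
  obtain ⟨C, hC, α, ⟨hα0, hα1⟩, hφ'⟩ := hφ
  set q' : ℝ := (2⁻¹:ℝ) ^ (α/2) with hq'def
  have hq'0 : 0 < q' := Real.rpow_pos_of_pos (by norm_num) _
  have hq'1 : q' < 1 := Real.rpow_lt_one (by norm_num) (by norm_num) (by linarith)
  have h2α : (0:ℝ) < (2:ℝ) ^ α := Real.rpow_pos_of_pos (by norm_num) _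
  have h1q' : (0:ℝ) < 1 - q' := by linarith
  refine ⟨2 * C * (2:ℝ)^α * (1 - q')⁻¹, by positivity, α/4, ⟨by linarith, by linarith⟩, ?_⟩
  intro c c' hc hc' hac hbc hac' hbc'
  by_cases hcc : c = c'
  · subst hcc
    have h12 : (∑' k : ℕ, (φ (shift2^[k] (pastePt A b c hb hc hbc)) -
          φ (shift2^[k] (pastePt A a c ha hc hac)))) =
        (∑' k : ℕ, (φ (shift2^[k] (pastePt A b c hb hc' hbc')) -
          φ (shift2^[k] (pastePt A a c ha hc' hac')))) := rfl
    rw [h12, sub_self, abs_zero]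
    have hd0 : 0 ≤ distPlus c c := tsum_nonneg fun i => by split <;> positivity
    exact mul_nonneg (by positivity) (Real.rpow_nonneg hd0 _)
  · have hex : ∃ k, c k ≠ c' k := by
      by_contra h
      push_neg at h
      exact hcc (funext h)
    set N := Nat.find hex with hNdef
    have hN : c N ≠ c' N := Nat.find_spec hex
    have hNmin : ∀ k, k < N → c k = c' k := fun k hk => not_not.mp (Nat.find_min hex hk)
    set d := distPlus c c' with hddef
    have hd0 : 0 ≤ d := tsum_nonneg fun i => by split <;> positivity
    have hdsummable : Summable (fun i : ℕ => if c i ≠ c' i then ((2:ℝ)⁻¹)^i else 0) := by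
      apply Summable.of_nonneg_of_le (fun i => by split <;> positivity)
        (fun i => ?_) (summable_geometric_of_lt_one (by norm_num) (by norm_num : (2⁻¹:ℝ) < 1))
      split
      · exact le_refl _
      · positivity
    have hdN : (2⁻¹:ℝ)^N ≤ d := by
      have := Summable.le_tsum hdsummable N (fun j _ => by split <;> positivity)
      rwa [if_pos hN] at this
    -- core exponent estimate
    have hcore : ∀ (m k : ℕ), (N:ℝ)*(α/4) + (α/2)*k ≤ (m:ℝ)*α →
        ((2⁻¹:ℝ)^m)^α ≤ d^(α/4) * q'^k := by
      intro m k hm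
      have e1 : ((2⁻¹:ℝ)^m)^α = (2⁻¹:ℝ) ^ ((m:ℝ)*α) := by
        rw [← Real.rpow_natCast ((2:ℝ)⁻¹) m, ← Real.rpow_mul (by norm_num)]
      have e2 : q'^k = (2⁻¹:ℝ) ^ ((α/2)*(k:ℝ)) := by
        rw [hq'def, ← Real.rpow_natCast ((2⁻¹:ℝ)^(α/2)) k, ← Real.rpow_mul (by norm_num)]
      have e3 : ((2⁻¹:ℝ)^N)^(α/4) = (2⁻¹:ℝ) ^ ((N:ℝ)*(α/4)) := by
        rw [← Real.rpow_natCast ((2:ℝ)⁻¹) N, ← Real.rpow_mul (by norm_num)]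
      calc ((2⁻¹:ℝ)^m)^α = (2⁻¹:ℝ) ^ ((m:ℝ)*α) := e1
        _ ≤ (2⁻¹:ℝ) ^ ((N:ℝ)*(α/4) + (α/2)*k) :=
            Real.rpow_le_rpow_of_exponent_ge (by norm_num) (by norm_num) hm
        _ = ((2⁻¹:ℝ)^N)^(α/4) * q'^k := by
            rw [Real.rpow_add (by norm_num), e3, e2]
        _ ≤ d^(α/4) * q'^k := by
            apply mul_le_mul_of_nonneg_right _ (pow_nonneg hq'0.le k)
            exact Real.rpow_le_rpow (by positivity) hdN (by linarith)
    -- bound for the pair (b·c0, a·c0)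
    have pair1 : ∀ (c0 : ℕ → Fin r) (hc0 : ∀ i, A (c0 i) (c0 (i+1)))
        (hac0 : A (a (-1)) (c0 0)) (hbc0 : A (b (-1)) (c0 0)) (k : ℕ),
        |φ (shift2^[k] (pastePt A b c0 hb hc0 hbc0)) -
          φ (shift2^[k] (pastePt A a c0 ha hc0 hac0))| ≤ C * (2 * (2⁻¹:ℝ)^k)^α := by
      intro c0 hc0 hac0 hbc0 k
      have hdist : dist2 (shift2^[k] (pastePt A b c0 hb hc0 hbc0))
          (shift2^[k] (pastePt A a c0 ha hc0 hac0)) ≤ 2 * (2⁻¹:ℝ)^k := by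
        apply dist2_le_left _ _ k
        intro i hi
        rw [shift2_iter_apply, shift2_iter_apply]
        show (if h : i + k < 0 then b (i+k) else c0 (i+k).toNat) =
          (if h : i + k < 0 then a (i+k) else c0 (i+k).toNat)
        rw [dif_neg (by omega), dif_neg (by omega)]
      calc |φ _ - φ _| ≤ C * dist2 _ _ ^ α := hφ' _ _
        _ ≤ C * (2*(2⁻¹:ℝ)^k)^α := by
            apply mul_le_mul_of_nonneg_left _ hC.le
            exact Real.rpow_le_rpow (dist2_nonneg' _ _) hdist hα0.le
    -- bound for the pair (p·c, p·c') when k ≤ N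
    have pair2 : ∀ (p : ℤ → Fin r) (hp : ∀ i : ℤ, i < -1 → A (p i) (p (i+1)))
        (hpc : A (p (-1)) (c 0)) (hpc' : A (p (-1)) (c' 0)) (k : ℕ), k ≤ N →
        |φ (shift2^[k] (pastePt A p c hp hc hpc)) -
          φ (shift2^[k] (pastePt A p c' hp hc' hpc'))| ≤ C * (2 * (2⁻¹:ℝ)^(N-k))^α := by
      intro p hp hpc hpc' k hkN
      have hdist : dist2 (shift2^[k] (pastePt A p c hp hc hpc))
          (shift2^[k] (pastePt A p c' hp hc' hpc')) ≤ 2 * (2⁻¹:ℝ)^(N-k) := by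
        apply dist2_le_right _ _ (N-k)
        intro i hi
        rw [shift2_iter_apply, shift2_iter_apply]
        show (if h : i + k < 0 then p (i+k) else c (i+k).toNat) =
          (if h : i + k < 0 then p (i+k) else c' (i+k).toNat)
        by_cases h : i + k < 0
        · rw [dif_pos h, dif_pos h]
        · rw [dif_neg h, dif_neg h]
          exact hNmin _ (by omega)
      calc |φ _ - φ _| ≤ C * dist2 _ _ ^ α := hφ' _ _
        _ ≤ C * (2*(2⁻¹:ℝ)^(N-k))^α := by
            apply mul_le_mul_of_nonneg_left _ hC.le
            exact Real.rpow_le_rpow (dist2_nonneg' _ _) hdist hα0.le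
    -- pointwise key bound
    have key : ∀ k : ℕ,
        |(φ (shift2^[k] (pastePt A b c hb hc hbc)) -
            φ (shift2^[k] (pastePt A a c ha hc hac))) -
          (φ (shift2^[k] (pastePt A b c' hb hc' hbc')) -
            φ (shift2^[k] (pastePt A a c' ha hc' hac')))| ≤
          (2 * C * (2:ℝ)^α * d^(α/4)) * q'^k := by
      intro k
      rcases le_or_gt (2*k) N with hk | hk
      · have hkN : k ≤ N := by omega
        have hB := pair2 b hb hbc hbc' k hkN
        have hA := pair2 a ha hac hac' k hkN
        have hcore' : ((2⁻¹:ℝ)^(N-k))^α ≤ d^(α/4) * q'^k := by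
          apply hcore (N-k) k
          have hcast : ((N-k:ℕ):ℝ) = (N:ℝ) - k := by
            rw [Nat.cast_sub hkN]
          rw [hcast]
          have hr : 2*(k:ℝ) ≤ (N:ℝ) := by exact_mod_cast hk
          nlinarith [mul_nonneg hα0.le (sub_nonneg.mpr hr)]
        have hrw : (φ (shift2^[k] (pastePt A b c hb hc hbc)) -
            φ (shift2^[k] (pastePt A a c ha hc hac))) -
          (φ (shift2^[k] (pastePt A b c' hb hc' hbc')) -
            φ (shift2^[k] (pastePt A a c' ha hc' hac'))) =
          (φ (shift2^[k] (pastePt A b c hb hc hbc)) -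
            φ (shift2^[k] (pastePt A b c' hb hc' hbc'))) -
          (φ (shift2^[k] (pastePt A a c ha hc hac)) -
            φ (shift2^[k] (pastePt A a c' ha hc' hac'))) := by ring
        rw [hrw]
        calc |_ - _| ≤ |φ (shift2^[k] (pastePt A b c hb hc hbc)) -
              φ (shift2^[k] (pastePt A b c' hb hc' hbc'))| +
            |φ (shift2^[k] (pastePt A a c ha hc hac)) -
              φ (shift2^[k] (pastePt A a c' ha hc' hac'))| := abs_sub _ _
          _ ≤ C * (2*(2⁻¹:ℝ)^(N-k))^α + C * (2*(2⁻¹:ℝ)^(N-k))^α := add_le_add hB hA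
          _ = 2*C*((2:ℝ)^α * ((2⁻¹:ℝ)^(N-k))^α) := by
              rw [Real.mul_rpow (by norm_num) (by positivity)]; ring
          _ ≤ 2*C*((2:ℝ)^α * (d^(α/4) * q'^k)) := by
              apply mul_le_mul_of_nonneg_left
                (mul_le_mul_of_nonneg_left hcore' h2α.le) (by positivity)
          _ = (2 * C * (2:ℝ)^α * d^(α/4)) * q'^k := by ring
      · have h1 := pair1 c hc hac hbc k
        have h2 := pair1 c' hc' hac' hbc' k
        have hcore' : ((2⁻¹:ℝ)^k)^α ≤ d^(α/4) * q'^k := by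
          apply hcore k k
          have hr : (N:ℝ) ≤ 2*(k:ℝ) := by exact_mod_cast hk.le
          nlinarith [mul_nonneg hα0.le (sub_nonneg.mpr hr)]
        calc |_ - _| ≤ |φ (shift2^[k] (pastePt A b c hb hc hbc)) -
              φ (shift2^[k] (pastePt A a c ha hc hac))| +
            |φ (shift2^[k] (pastePt A b c' hb hc' hbc')) -
              φ (shift2^[k] (pastePt A a c' ha hc' hac'))| := abs_sub _ _
          _ ≤ C * (2*(2⁻¹:ℝ)^k)^α + C * (2*(2⁻¹:ℝ)^k)^α := add_le_add h1 h2
          _ = 2*C*((2:ℝ)^α * ((2⁻¹:ℝ)^k)^α) := by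
              rw [Real.mul_rpow (by norm_num) (by positivity)]; ring
          _ ≤ 2*C*((2:ℝ)^α * (d^(α/4) * q'^k)) := by
              apply mul_le_mul_of_nonneg_left
                (mul_le_mul_of_nonneg_left hcore' h2α.le) (by positivity)
          _ = (2 * C * (2:ℝ)^α * d^(α/4)) * q'^k := by ring
    -- summability facts
    have hgeoα : Summable (fun k : ℕ => ((2⁻¹:ℝ)^α)^k) :=
      summable_geometric_of_lt_one (Real.rpow_nonneg (by norm_num) _)
        (Real.rpow_lt_one (by norm_num) (by norm_num) hα0)
    have hpowrw : ∀ k : ℕ, (2*(2⁻¹:ℝ)^k)^α = (2:ℝ)^α * ((2⁻¹:ℝ)^α)^k := by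
      intro k
      rw [Real.mul_rpow (by norm_num) (by positivity), ← Real.rpow_natCast ((2:ℝ)⁻¹) k,
        ← Real.rpow_mul (by norm_num), mul_comm (k:ℝ) α, Real.rpow_mul (by norm_num),
        Real.rpow_natCast]
    have hfsum : ∀ (c0 : ℕ → Fin r) (hc0 : ∀ i, A (c0 i) (c0 (i+1)))
        (hac0 : A (a (-1)) (c0 0)) (hbc0 : A (b (-1)) (c0 0)),
        Summable (fun k : ℕ => φ (shift2^[k] (pastePt A b c0 hb hc0 hbc0)) -
          φ (shift2^[k] (pastePt A a c0 ha hc0 hac0))) := by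
      intro c0 hc0 hac0 hbc0
      apply Summable.of_norm_bounded (g := fun k => C * ((2:ℝ)^α * ((2⁻¹:ℝ)^α)^k))
        ((hgeoα.mul_left _).mul_left _)
      intro k
      rw [Real.norm_eq_abs, ← hpowrw k]
      exact pair1 c0 hc0 hac0 hbc0 k
    have hf := hfsum c hc hac hbc
    have hg := hfsum c' hc' hac' hbc'
    have hboundsum : Summable (fun k : ℕ => (2 * C * (2:ℝ)^α * d^(α/4)) * q'^k) :=
      (summable_geometric_of_lt_one hq'0.le hq'1).mul_left _
    have hnormsum : Summable (fun k : ℕ =>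
        |(φ (shift2^[k] (pastePt A b c hb hc hbc)) -
            φ (shift2^[k] (pastePt A a c ha hc hac))) -
          (φ (shift2^[k] (pastePt A b c' hb hc' hbc')) -
            φ (shift2^[k] (pastePt A a c' ha hc' hac')))|) :=
      Summable.of_nonneg_of_le (fun k => abs_nonneg _) key hboundsum
    rw [← Summable.tsum_sub hf hg]
    calc |∑' k : ℕ, ((φ (shift2^[k] (pastePt A b c hb hc hbc)) -
            φ (shift2^[k] (pastePt A a c ha hc hac))) -
          (φ (shift2^[k] (pastePt A b c' hb hc' hbc')) -
            φ (shift2^[k] (pastePt A a c' ha hc' hac'))))|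
        ≤ ∑' k : ℕ, |(φ (shift2^[k] (pastePt A b c hb hc hbc)) -
            φ (shift2^[k] (pastePt A a c ha hc hac))) -
          (φ (shift2^[k] (pastePt A b c' hb hc' hbc')) -
            φ (shift2^[k] (pastePt A a c' ha hc' hac')))| := by
          have := norm_tsum_le_tsum_norm (f := fun k : ℕ =>
            (φ (shift2^[k] (pastePt A b c hb hc hbc)) -
              φ (shift2^[k] (pastePt A a c ha hc hac))) -
            (φ (shift2^[k] (pastePt A b c' hb hc' hbc')) -
              φ (shift2^[k] (pastePt A a c' ha hc' hac')))) (by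
                simpa [Real.norm_eq_abs] using hnormsum)
          simpa [Real.norm_eq_abs] using this
      _ ≤ ∑' k : ℕ, (2 * C * (2:ℝ)^α * d^(α/4)) * q'^k :=
          Summable.tsum_le_tsum key hnormsum hboundsum
      _ = (2 * C * (2:ℝ)^α * d^(α/4)) * (1 - q')⁻¹ := by
          rw [tsum_mul_left, tsum_geometric_of_lt_one hq'0.le hq'1]
      _ = 2 * C * (2:ℝ)^α * (1 - q')⁻¹ * d^(α/4) := by ring
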